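/- Open games with sequential composition form a category: composition of open games is associative up to natural isomorphism of strategy sets (i.e., there is a bijection Σ(𝒦∘(ℋ∘𝒢)) ≅ Σ((𝒦∘ℋ)∘𝒢) that preserves play, coplay, and equilibrium functions). -/

import Mathlib

/-- An open game `(X,S) → (Y,R)`: a set of strategy profiles together with
play, coplay and equilibrium functions. -/
structure OpenGame (X S Y R : Type) where
  Strat : Type
  play : Strat → X → Y
  coplay : Strat → X → R → S
  equil : X → (Y → R) → Set Strat

namespace OpenGame

/-- Sequential composition: `comp G H` is `H ∘ G` (first `G`, then `H`). -/
def comp {X S Y R Z Q : Type} (G : OpenGame X S Y R) (H : OpenGame Y R Z Q) :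
    OpenGame X S Z Q where
  Strat := G.Strat × H.Strat
  play := fun p x => H.play p.2 (G.play p.1 x)
  coplay := fun p x q => G.coplay p.1 x (H.coplay p.2 (G.play p.1 x) q)
  equil := fun x k =>
    {p | p.1 ∈ G.equil x (fun y => H.coplay p.2 y (k (H.play p.2 y))) ∧
         p.2 ∈ H.equil (G.play p.1 x) k}

/-- Monoidal product of open games. -/
def tensor {X S Y R X' S' Y' R' : Type}
    (G : OpenGame X S Y R) (H : OpenGame X' S' Y' R') :
    OpenGame (X × X') (S × S') (Y × Y') (R × R') where
  Strat := G.Strat × H.Strat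
  play := fun p x => (G.play p.1 x.1, H.play p.2 x.2)
  coplay := fun p x r => (G.coplay p.1 x.1 r.1, H.coplay p.2 x.2 r.2)
  equil := fun x k =>
    {p | p.1 ∈ G.equil x.1 (fun y => (k (y, H.play p.2 x.2)).1) ∧
         p.2 ∈ H.equil x.2 (fun y' => (k (G.play p.1 x.1, y')).2)}

/-- A (globular) morphism of open games: a map of strategy profiles preserving
play, coplay, and mapping equilibria to equilibria. -/
def IsMorphism {X S Y R : Type} (G H : OpenGame X S Y R) (α : G.Strat → H.Strat) : Prop :=
  (∀ σ x, G.play σ x = H.play (α σ) x) ∧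
  (∀ σ x r, G.coplay σ x r = H.coplay (α σ) x r) ∧
  (∀ σ x k, σ ∈ G.equil x k → α σ ∈ H.equil x k)

/-- Isomorphism of open games: a bijection of strategy profiles preserving play,
coplay, and equilibria in both directions. -/
def Isomorphic {X S Y R : Type} (G H : OpenGame X S Y R) : Prop :=
  ∃ e : G.Strat ≃ H.Strat,
    (∀ σ x, G.play σ x = H.play (e σ) x) ∧
    (∀ σ x r, G.coplay σ x r = H.coplay (e σ) x r) ∧
    (∀ σ x k, σ ∈ G.equil x k ↔ e σ ∈ H.equil x k)

/-- The identity open game on `(X,S)`. -/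
def idOG (X S : Type) : OpenGame X S X S where
  Strat := Unit
  play := fun _ x => x
  coplay := fun _ _ s => s
  equil := fun _ _ => Set.univ

end OpenGame

open OpenGame

/-- composition of open games is associative up to isomorphism. -/
theorem comp_assoc {X S Y R Z Q W P : Type}
    (G : OpenGame X S Y R) (H : OpenGame Y R Z Q) (K : OpenGame Z Q W P) :
    Isomorphic (comp (comp G H) K) (comp G (comp H K)) := by
  refine ⟨Equiv.prodAssoc _ _ _, fun σ x => rfl, fun σ x r => rfl, fun σ x k => ?_⟩
  obtain ⟨⟨a, b⟩, c⟩ := σ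
  simp only [comp, Set.mem_setOf_eq, Equiv.prodAssoc]
  exact and_assoc
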